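/- arXiv:1103.5478 — 2 statements merged into one kernel-verified Lean document; each statement's English description precedes it below -/
import Mathlib

section
/- For every t ≥ 2 and every q ∈ (ℝ_+^*)^t, the k-th derivative of the density of ⟨q,X⟩ vanishes at 0: f_{⟨q,X⟩}^{(k)}(0) = 0 for all k = 0, 1, …, t−2. -/
open MeasureTheory ProbabilityTheory Finset

/-- The law of `(X_1, …, X_t)` where the `X_i` are i.i.d. `Exp(1)`. -/
noncomputable def expLaw (t : ℕ) : Measure (Fin t → ℝ) :=
  Measure.pi fun _ => expMeasure 1

open Filter Topology Set

instance expM_prob : IsProbabilityMeasure (expMeasure 1) := isProbabilityMeasure_expMeasure one_pos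

instance expLaw_prob (t : ℕ) : IsProbabilityMeasure (expLaw t) := by
  unfold expLaw; infer_instance

lemma expMeasure_Iio_zero' : expMeasure 1 (Set.Iio 0) = 0 := by
  rw [show expMeasure 1 = volume.withDensity (exponentialPDF 1) from rfl,
    withDensity_apply _ measurableSet_Iio]
  exact lintegral_exponentialPDF_of_nonpos le_rfl

lemma expMeasure_le_volume' (s : Set ℝ) : expMeasure 1 s ≤ volume s := by
  have h : expMeasure 1 ≤ volume := by
    rw [show expMeasure 1 = volume.withDensity (exponentialPDF 1) from rfl]
    nth_rewrite 2 [← withDensity_one (μ := volume)]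
    refine withDensity_mono (ae_of_all _ fun x => ?_)
    rw [exponentialPDF_eq]
    split_ifs with h
    · have h1 : Real.exp (-(1*x)) ≤ 1 := Real.exp_le_one_iff.2 (by linarith)
      have : ENNReal.ofReal (1 * Real.exp (-(1*x))) ≤ 1 := ENNReal.ofReal_le_one.2 (by linarith)
      simpa using this
    · simp
  exact h s

lemma expLaw_ae_nonneg (t : ℕ) : ∀ᵐ v ∂(expLaw t), ∀ i, 0 ≤ v i := by
  rw [ae_all_iff]
  intro i
  rw [ae_iff]
  have h : {v : Fin t → ℝ | ¬ 0 ≤ v i} = Function.eval i ⁻¹' Set.Iio 0 := by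
    ext w; simp [not_le]
  rw [h]
  exact Measure.pi_eval_preimage_null _ expMeasure_Iio_zero'

lemma measurable_S {t : ℕ} (q : Fin t → ℝ) :
    Measurable (fun v : Fin t → ℝ => ∑ i, q i * v i) :=
  Finset.measurable_sum _ fun i _ => by fun_prop

lemma expMeasure_Ioo_pos' {a b : ℝ} (ha : 0 ≤ a) (hab : a < b) :
    0 < expMeasure 1 (Set.Ioo a b) := by
  rw [show expMeasure 1 = volume.withDensity (exponentialPDF 1) from rfl,
    withDensity_apply _ measurableSet_Ioo]
  have hlow : ∀ x ∈ Set.Ioo a b, ENNReal.ofReal (Real.exp (-b)) ≤ exponentialPDF 1 x := by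
    intro x hx
    rw [exponentialPDF_of_nonneg (by linarith [hx.1] : (0:ℝ) ≤ x)]
    exact ENNReal.ofReal_le_ofReal (by simpa using Real.exp_le_exp.2 (by linarith [hx.2]))
  calc 0 < ENNReal.ofReal (Real.exp (-b)) * volume (Set.Ioo a b) := by
        apply ENNReal.mul_pos
        · simpa using Real.exp_pos (-b)
        · simp [Real.volume_Ioo]; linarith
    _ = ∫⁻ _x in Set.Ioo a b, ENNReal.ofReal (Real.exp (-b)) := by
        rw [setLIntegral_const, mul_comm]
    _ ≤ ∫⁻ x in Set.Ioo a b, exponentialPDF 1 x :=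
        setLIntegral_mono (measurable_exponentialPDFReal 1).ennreal_ofReal hlow

lemma nu_Ioo_pos (t : ℕ) (ht : 1 ≤ t) (q : Fin t → ℝ) (hq : ∀ i, 0 < q i)
    {a b : ℝ} (ha : 0 ≤ a) (hab : a < b) :
    0 < Measure.map (fun v : Fin t → ℝ => ∑ i, q i * v i) (expLaw t) (Set.Ioo a b) := by
  rw [Measure.map_apply (measurable_S q) measurableSet_Ioo]
  set c : ℝ := (a + b) / 2 with hc
  have hc0 : 0 < c := by simp only [hc]; linarith
  have ht0 : (0:ℝ) < t := by exact_mod_cast ht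
  set x : Fin t → ℝ := fun i => c / (t * q i) with hx
  have hx0 : ∀ i, 0 < x i := fun i => div_pos hc0 (mul_pos ht0 (hq i))
  set ε : ℝ := (b - a) / (4 * c) with hε
  have hε0 : 0 < ε := div_pos (by linarith) (by positivity)
  have hε1 : ε ≤ 1 / 2 := by
    rw [hε, hc, div_le_div_iff₀ (by positivity) (by norm_num)]
    nlinarith
  have hsum : ∑ i, q i * x i = c := by
    have : ∀ i, q i * x i = c / t := by
      intro i
      have hqi : q i ≠ 0 := (hq i).ne'
      have htne : (t:ℝ) ≠ 0 := ht0.ne'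
      rw [hx]
      field_simp
    rw [Finset.sum_congr rfl fun i _ => this i, Finset.sum_const]
    simp only [Finset.card_univ, Fintype.card_fin, nsmul_eq_mul]
    field_simp
  have hsumε : ∑ i, q i * (ε * x i) = ε * c := by
    rw [← hsum, Finset.mul_sum]
    exact Finset.sum_congr rfl fun i _ => by ring
  have hεc : ε * c = (b - a) / 4 := by
    rw [hε]; field_simp
  have hbox : (Set.pi Set.univ fun i => Set.Ioo (x i - ε * x i) (x i + ε * x i)) ⊆
      (fun v : Fin t → ℝ => ∑ i, q i * v i) ⁻¹' Set.Ioo a b := by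
    intro w hw
    simp only [Set.mem_pi, Set.mem_univ, forall_true_left, Set.mem_Ioo] at hw
    have hub : ∑ i, q i * w i ≤ ∑ i, (q i * x i + q i * (ε * x i)) := by
      apply Finset.sum_le_sum
      intro i _
      have := (hw i).2
      nlinarith [(hq i).le, (hq i)]
    have hlb : ∑ i, (q i * x i - q i * (ε * x i)) ≤ ∑ i, q i * w i := by
      apply Finset.sum_le_sum
      intro i _
      have := (hw i).1
      nlinarith [(hq i)]
    rw [Finset.sum_add_distrib, hsum, hsumε, hεc] at hub
    rw [Finset.sum_sub_distrib, hsum, hsumε, hεc] at hlb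
    have hcab : c = (a + b) / 2 := rfl
    simp only [Set.mem_preimage, Set.mem_Ioo]
    constructor
    · linarith
    · linarith
  calc 0 < ∏ i, expMeasure 1 (Set.Ioo (x i - ε * x i) (x i + ε * x i)) := by
        rw [CanonicallyOrderedAdd.prod_pos]
        intro i _
        apply expMeasure_Ioo_pos'
        · nlinarith [hx0 i]
        · nlinarith [hx0 i]
    _ = (expLaw t) (Set.pi Set.univ fun i => Set.Ioo (x i - ε * x i) (x i + ε * x i)) :=
        (Measure.pi_pi _ _).symm
    _ ≤ _ := measure_mono hbox

lemma nu_Icc_le (n : ℕ) (q : Fin (n + 1) → ℝ) (hq : ∀ i, 0 < q i)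
    {u v : ℝ} (hu : 0 ≤ u) (huv : u ≤ v) :
    Measure.map (fun w : Fin (n + 1) → ℝ => ∑ i, q i * w i) (expLaw (n + 1)) (Set.Icc u v)
      ≤ ENNReal.ofReal ((v - u) * v ^ n / ∏ i, q i) := by
  rw [Measure.map_apply (measurable_S q) measurableSet_Icc]
  set S := fun w : Fin (n + 1) → ℝ => ∑ i, q i * w i with hS
  set A := S ⁻¹' Set.Icc u v with hA
  set N := {w : Fin (n + 1) → ℝ | ∀ i, 0 ≤ w i} with hN
  have hNc : expLaw (n + 1) Nᶜ = 0 := by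
    have := expLaw_ae_nonneg (n + 1)
    rw [ae_iff] at this
    exact this
  -- the product side
  set e := MeasurableEquiv.piFinSuccAbove (fun _ : Fin (n + 1) => ℝ) 0 with he
  set P : Measure (Fin n → ℝ) := Measure.pi fun _ => expMeasure 1 with hP
  set box : Set (Fin n → ℝ) := Set.pi Set.univ fun j => Set.Icc 0 (v / q (Fin.succ j)) with hbox
  set T : Set (ℝ × (Fin n → ℝ)) :=
    {p | q 0 * p.1 + ∑ j, q (Fin.succ j) * p.2 j ∈ Set.Icc u v} ∩ {p | p.2 ∈ box} with hT
  have hTmeas : MeasurableSet T := by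
    apply MeasurableSet.inter
    · exact (measurable_fst.const_mul (q 0) |>.add
        (Finset.measurable_sum _ fun j _ =>
          (by fun_prop : Measurable fun p : ℝ × (Fin n → ℝ) => q (Fin.succ j) * p.2 j)))
        measurableSet_Icc
    · exact measurable_snd (MeasurableSet.univ_pi fun j => measurableSet_Icc)
  have hincl : A ∩ N ⊆ e ⁻¹' T := by
    intro w ⟨hwA, hwN⟩
    have hsum : S w = q 0 * w 0 + ∑ j, q (Fin.succ j) * w (Fin.succ j) := by
      rw [hS]; exact Fin.sum_univ_succ _
    have hterm : ∀ i : Fin (n + 1), q i * w i ≤ v := by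
      intro i
      calc q i * w i ≤ ∑ i', q i' * w i' :=
            Finset.single_le_sum (fun i' _ => mul_nonneg (hq i').le (hwN i')) (Finset.mem_univ i)
        _ ≤ v := hwA.2
    constructor
    · show q 0 * (e w).1 + ∑ j, q (Fin.succ j) * (e w).2 j ∈ Set.Icc u v
      have h1 : (e w).1 = w 0 := rfl
      have h2 : ∀ j, (e w).2 j = w (Fin.succ j) := fun j => rfl
      simp only [h1, h2]
      rw [← hsum]
      exact hwA
    · show (e w).2 ∈ box
      intro j _
      refine ⟨hwN _, ?_⟩
      have := hterm (Fin.succ j)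
      rw [le_div_iff₀ (hq (Fin.succ j))]
      show w (Fin.succ j) * q (Fin.succ j) ≤ v
      linarith [this]
  have hmp := measurePreserving_piFinSuccAbove (fun _ : Fin (n + 1) => expMeasure 1) 0
  have hAN : expLaw (n + 1) A ≤ ((expMeasure 1).prod P) T := by
    calc expLaw (n + 1) A ≤ expLaw (n + 1) ((A ∩ N) ∪ Nᶜ) :=
          measure_mono (fun w hw => by
            by_cases h : w ∈ N
            · exact Or.inl ⟨hw, h⟩
            · exact Or.inr h)
      _ ≤ expLaw (n + 1) (A ∩ N) + expLaw (n + 1) Nᶜ := measure_union_le _ _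
      _ = expLaw (n + 1) (A ∩ N) := by rw [hNc, add_zero]
      _ ≤ expLaw (n + 1) (e ⁻¹' T) := measure_mono hincl
      _ = ((expMeasure 1).prod P) T := hmp.measure_preimage hTmeas.nullMeasurableSet
  refine hAN.trans ?_
  -- compute/bound the product measure of T
  have hslice : ∀ y : Fin n → ℝ,
      expMeasure 1 ((fun x => (x, y)) ⁻¹' T) ≤
        box.indicator (fun _ => ENNReal.ofReal ((v - u) / q 0)) y := by
    intro y
    by_cases hy : y ∈ box
    · rw [Set.indicator_of_mem hy]
      set R := ∑ j, q (Fin.succ j) * y j with hR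
      have hsub : (fun x => (x, y)) ⁻¹' T ⊆ Set.Icc ((u - R) / q 0) ((v - R) / q 0) := by
        intro x hx
        obtain ⟨⟨h1, h2⟩, _⟩ := hx
        constructor
        · rw [div_le_iff₀ (hq 0)]; rw [← hR] at h1; linarith [mul_comm (q 0) x]
        · rw [le_div_iff₀ (hq 0)]; rw [← hR] at h2; linarith [mul_comm (q 0) x]
      calc expMeasure 1 ((fun x => (x, y)) ⁻¹' T) ≤
            expMeasure 1 (Set.Icc ((u - R) / q 0) ((v - R) / q 0)) := measure_mono hsub
        _ ≤ volume (Set.Icc ((u - R) / q 0) ((v - R) / q 0)) := expMeasure_le_volume' _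
        _ = ENNReal.ofReal ((v - R) / q 0 - (u - R) / q 0) := Real.volume_Icc
        _ = ENNReal.ofReal ((v - u) / q 0) := by rw [div_sub_div_same]; ring_nf
    · rw [Set.indicator_of_notMem hy]
      have : (fun x => (x, y)) ⁻¹' T = ∅ := by
        ext x
        simp only [Set.mem_preimage, Set.mem_empty_iff_false, iff_false]
        intro hx
        exact hy hx.2
      rw [this]; simp
  have hboxmeas : MeasurableSet box := MeasurableSet.univ_pi fun j => measurableSet_Icc
  calc ((expMeasure 1).prod P) T = ∫⁻ y, expMeasure 1 ((fun x => (x, y)) ⁻¹' T) ∂P :=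
        Measure.prod_apply_symm hTmeas
    _ ≤ ∫⁻ y, box.indicator (fun _ => ENNReal.ofReal ((v - u) / q 0)) y ∂P :=
        lintegral_mono hslice
    _ = ENNReal.ofReal ((v - u) / q 0) * P box := by
        rw [lintegral_indicator hboxmeas, setLIntegral_const, mul_comm]
    _ ≤ ENNReal.ofReal ((v - u) / q 0) * ∏ j : Fin n, ENNReal.ofReal (v / q (Fin.succ j)) := by
        apply mul_le_mul_right
        rw [hP, hbox, Measure.pi_pi]
        apply Finset.prod_le_prod'
        intro j _
        calc expMeasure 1 (Set.Icc 0 (v / q (Fin.succ j)))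
            ≤ volume (Set.Icc 0 (v / q (Fin.succ j))) := expMeasure_le_volume' _
          _ = ENNReal.ofReal (v / q (Fin.succ j)) := by rw [Real.volume_Icc, sub_zero]
    _ = ENNReal.ofReal ((v - u) * v ^ n / ∏ i, q i) := by
        have hnn : ∀ j : Fin n, j ∈ Finset.univ → 0 ≤ v / q (Fin.succ j) := fun j _ =>
          div_nonneg (le_trans hu huv) (hq _).le
        rw [← ENNReal.ofReal_prod_of_nonneg hnn,
          ← ENNReal.ofReal_mul (div_nonneg (by linarith) (hq 0).le)]
        congr 1
        rw [Finset.prod_div_distrib, Finset.prod_const, Finset.card_univ, Fintype.card_fin,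
          Fin.prod_univ_succ (fun i => q i)]
        have h0 : q 0 ≠ 0 := (hq 0).ne'
        have h1 : (∏ j : Fin n, q (Fin.succ j)) ≠ 0 :=
          Finset.prod_ne_zero_iff.2 fun j _ => (hq _).ne'
        field_simp

lemma exists_iter_deriv_small (f : ℝ → ℝ) (C : ℝ) (m : ℕ)
    (hb : ∀ y : ℝ, 0 < y → |f y| ≤ C * y ^ m) :
    ∀ k : ℕ, ∃ K : ℝ, 0 ≤ K ∧ ∀ a b : ℝ, 0 < a → a < b →
      ∃ ξ ∈ Set.Icc a b, |deriv^[k] f ξ| ≤ K * b ^ m / (b - a) ^ k := by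
  intro k
  induction k with
  | zero =>
    refine ⟨max C 0, le_max_right _ _, fun a b ha hab => ⟨b, ⟨hab.le, le_rfl⟩, ?_⟩⟩
    simp only [Function.iterate_zero_apply, pow_zero, div_one]
    calc |f b| ≤ C * b ^ m := hb b (ha.trans hab)
      _ ≤ max C 0 * b ^ m := by
          have hb0 : 0 < b := ha.trans hab
          apply mul_le_mul_of_nonneg_right (le_max_left _ _)
          positivity
  | succ k ih =>
    obtain ⟨K, hK0, hK⟩ := ih
    refine ⟨2 * K * 3 ^ (k + 1), by positivity, fun a b ha hab => ?_⟩
    set d : ℝ := (b - a) / 3 with hd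
    have hd0 : 0 < d := by rw [hd]; linarith
    have hb0 : 0 < b := by linarith
    obtain ⟨ξ₁, hξ₁mem, hξ₁⟩ := hK a (a + d) ha (by linarith)
    obtain ⟨ξ₂, hξ₂mem, hξ₂⟩ := hK (b - d) b (by linarith) (by linarith)
    have had : a + d - a = d := by ring
    have hbd : b - (b - d) = d := by ring
    rw [had] at hξ₁
    rw [hbd] at hξ₂
    have hξ₁b : |deriv^[k] f ξ₁| ≤ K * b ^ m / d ^ k := by
      refine le_trans hξ₁ ?_
      gcongr
      linarith [hξ₂mem.1, hξ₁mem.2]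
    have hξ₂b : |deriv^[k] f ξ₂| ≤ K * b ^ m / d ^ k := hξ₂
    have hξlt : ξ₁ < ξ₂ := by
      calc ξ₁ ≤ a + d := hξ₁mem.2
        _ < b - d := by rw [hd]; linarith
        _ ≤ ξ₂ := hξ₂mem.1
    have hRHS : (0:ℝ) ≤ 2 * K * 3 ^ (k + 1) * b ^ m / (b - a) ^ (k + 1) := by
      have hba : (0:ℝ) < b - a := by linarith
      positivity
    by_cases hdiff : ∀ x ∈ Set.Icc ξ₁ ξ₂, DifferentiableAt ℝ (deriv^[k] f) x
    · obtain ⟨c, hcmem, hc'⟩ := exists_hasDerivAt_eq_slope (deriv^[k] f)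
        (deriv (deriv^[k] f)) hξlt
        (fun x hx => (hdiff x hx).continuousAt.continuousWithinAt)
        (fun x hx => (hdiff x (Set.mem_Icc_of_Ioo hx)).hasDerivAt)
      refine ⟨c, ⟨?_, ?_⟩, ?_⟩
      · linarith [hcmem.1.le, hξ₁mem.1]
      · linarith [hcmem.2.le, hξ₂mem.2]
      rw [Function.iterate_succ_apply', hc']
      have hgap : d ≤ ξ₂ - ξ₁ := by
        have h1 : a + d ≤ b - 2 * d := by rw [hd]; linarith
        linarith [hξ₁mem.2, hξ₂mem.1]
      have habs : |(deriv^[k] f ξ₂ - deriv^[k] f ξ₁) / (ξ₂ - ξ₁)|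
          ≤ (2 * (K * b ^ m / d ^ k)) / d := by
        rw [abs_div, abs_of_pos (by linarith : (0:ℝ) < ξ₂ - ξ₁)]
        apply div_le_div₀ (by positivity) ?_ hd0 hgap
        calc |deriv^[k] f ξ₂ - deriv^[k] f ξ₁| ≤ |deriv^[k] f ξ₂| + |deriv^[k] f ξ₁| :=
              abs_sub _ _
          _ ≤ 2 * (K * b ^ m / d ^ k) := by linarith
      refine habs.trans (le_of_eq ?_)
      rw [hd, div_pow]
      field_simp
      ring
    · push_neg at hdiff
      obtain ⟨x, hxmem, hx⟩ := hdiff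
      refine ⟨x, ⟨?_, ?_⟩, ?_⟩
      · linarith [hxmem.1, hξ₁mem.1]
      · linarith [hxmem.2, hξ₂mem.2]
      rw [Function.iterate_succ_apply', deriv_zero_of_not_differentiableAt hx]
      simpa using hRHS

lemma iter_deriv_zero_at_zero (f : ℝ → ℝ) (C : ℝ) (m : ℕ)
    (hb : ∀ y : ℝ, 0 < y → |f y| ≤ C * y ^ m) (h0 : f 0 = 0) :
    ∀ k : ℕ, k + 1 ≤ m → deriv^[k] f 0 = 0 := by
  intro k
  induction k with
  | zero => intro _; simpa using h0
  | succ k ih =>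
    intro hkm
    have hk0 : deriv^[k] f 0 = 0 := ih (by omega)
    rw [Function.iterate_succ_apply']
    by_cases hd : DifferentiableAt ℝ (deriv^[k] f) 0
    · obtain ⟨K, hK0, hK⟩ := exists_iter_deriv_small f C m hb k
      have hder := hd.hasDerivAt
      rw [hasDerivAt_iff_tendsto_slope] at hder
      -- the sequence of good points
      have hab : ∀ j : ℕ, (0:ℝ) < 1 / (2 * ((j:ℝ) + 1)) := by
        intro j; positivity
      have hab2 : ∀ j : ℕ, 1 / (2 * ((j:ℝ) + 1)) < 1 / ((j:ℝ) + 1) := by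
        intro j
        apply one_div_lt_one_div_of_lt (by positivity)
        nlinarith [Nat.cast_nonneg (α := ℝ) j]
      choose ξ hmem hbnd using fun j : ℕ =>
        hK (1 / (2 * ((j:ℝ) + 1))) (1 / ((j:ℝ) + 1)) (hab j) (hab2 j)
      have hξpos : ∀ j, 0 < ξ j := fun j => lt_of_lt_of_le (hab j) (hmem j).1
      have hξle : ∀ j, ξ j ≤ 1 / ((j:ℝ) + 1) := fun j => (hmem j).2
      have htend0 : Tendsto ξ atTop (𝓝 0) := by
        apply squeeze_zero (fun j => (hξpos j).le) hξle
        exact tendsto_one_div_add_atTop_nhds_zero_nat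
      have htend : Tendsto ξ atTop (𝓝[≠] (0:ℝ)) := by
        apply tendsto_nhdsWithin_of_tendsto_nhds_of_eventually_within _ htend0
        exact Eventually.of_forall fun j => (hξpos j).ne'
      have hslope := hder.comp htend
      -- bound on the slopes
      have hb2 : ∀ j : ℕ, |slope (deriv^[k] f) 0 (ξ j)| ≤
          K * 2 ^ (k + 1) * (1 / ((j:ℝ) + 1)) := by
        intro j
        set bj : ℝ := 1 / ((j:ℝ) + 1) with hbj
        have hbj0 : 0 < bj := by positivity
        have hbj1 : bj ≤ 1 := by
          rw [hbj]
          rw [div_le_one (by positivity)]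
          linarith [Nat.cast_nonneg (α := ℝ) j]
        have haj : 1 / (2 * ((j:ℝ) + 1)) = bj / 2 := by
          rw [hbj, div_div]
          ring_nf
        have hsub : bj - bj / 2 = bj / 2 := by ring
        have hbnd' : |deriv^[k] f (ξ j)| ≤ K * bj ^ m / (bj / 2) ^ k := by
          have h := hbnd j
          rw [haj, hsub] at h
          exact h
        rw [slope_def_field, hk0, sub_zero, sub_zero]
        rw [abs_div, abs_of_pos (hξpos j)]
        have hξa : bj / 2 ≤ ξ j := by
          have := (hmem j).1
          rwa [haj] at this
        calc |deriv^[k] f (ξ j)| / ξ j ≤ (K * bj ^ m / (bj / 2) ^ k) / (bj / 2) := by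
              apply div_le_div₀ (by positivity) hbnd' (by positivity) hξa
          _ = K * 2 ^ (k + 1) * (bj ^ m / bj ^ (k + 1)) := by
              clear_value bj
              rw [div_pow]
              field_simp
              ring
          _ = K * 2 ^ (k + 1) * bj ^ (m - (k + 1)) := by
              rw [pow_sub₀ bj hbj0.ne' (by omega : k + 1 ≤ m), ← div_eq_mul_inv]
          _ ≤ K * 2 ^ (k + 1) * bj := by
              apply mul_le_mul_of_nonneg_left ?_ (by positivity)
              have h1 : 1 ≤ m - (k + 1) := by omega
              calc bj ^ (m - (k + 1)) ≤ bj ^ 1 := by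
                    apply pow_le_pow_of_le_one hbj0.le hbj1 h1
                _ = bj := pow_one bj
      have hzero : Tendsto (fun j => slope (deriv^[k] f) 0 (ξ j)) atTop (𝓝 0) := by
        apply squeeze_zero_norm hb2
        have := tendsto_one_div_add_atTop_nhds_zero_nat.const_mul (K * 2 ^ (k + 1))
        simpa using this
      exact tendsto_nhds_unique hslope hzero
    · exact deriv_zero_of_not_differentiableAt hd

/-- for `t ≥ 2` and `q ∈ (ℝ₊^*)^t`, the `k`-th derivative of the (continuous
version of the) density of `⟨q,X⟩` vanishes at `0`, for every `k = 0, 1, …, t−2`. -/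
theorem iteratedDeriv_density_at_zero (t : ℕ) (ht : 2 ≤ t) (q : Fin t → ℝ)
    (hq : ∀ i, 0 < q i)
    (f : ℝ → ℝ) (hf_cont : Continuous f)
    (hf_density : Measure.map (fun v : Fin t → ℝ => ∑ i, q i * v i) (expLaw t) =
      MeasureTheory.volume.withDensity fun y => ENNReal.ofReal (f y)) :
    ∀ k : ℕ, k ≤ t - 2 → iteratedDeriv k f 0 = 0 := by
  obtain ⟨n, rfl⟩ : ∃ n, t = n + 1 := ⟨t - 1, by omega⟩
  have hn : 1 ≤ n := by omega
  have nu_apply : ∀ s : Set ℝ, MeasurableSet s →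
      Measure.map (fun v : Fin (n + 1) → ℝ => ∑ i, q i * v i) (expLaw (n + 1)) s =
        ∫⁻ y in s, ENNReal.ofReal (f y) := by
    intro s hs
    rw [hf_density, withDensity_apply _ hs]
  set Cq : ℝ := ∏ i, q i with hCq
  have hCq0 : 0 < Cq := Finset.prod_pos fun i _ => hq i
  -- f is nonnegative on positive reals
  have F1 : ∀ y : ℝ, 0 < y → 0 ≤ f y := by
    intro y hy
    by_contra hcon
    push_neg at hcon
    have hopen : IsOpen {z : ℝ | f z < 0} := isOpen_lt hf_cont continuous_const
    obtain ⟨ε, hε0, hball⟩ := Metric.isOpen_iff.1 hopen y hcon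
    set δ : ℝ := min ε y with hδ
    have hδ0 : 0 < δ := lt_min hε0 hy
    set a : ℝ := y - δ / 2 with ha
    set b : ℝ := y + δ / 2 with hb
    have ha0 : 0 ≤ a := by
      have : δ ≤ y := min_le_right _ _
      rw [ha]; linarith
    have hab : a < b := by rw [ha, hb]; linarith
    have hsub : Set.Ioo a b ⊆ {z : ℝ | f z < 0} := by
      intro z hz
      apply hball
      rw [Metric.mem_ball, Real.dist_eq, abs_lt]
      have : δ ≤ ε := min_le_left _ _
      constructor
      · rw [ha] at hz; have := hz.1; linarith
      · rw [hb] at hz; have := hz.2; linarith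
    have hpos := nu_Ioo_pos (n + 1) (by omega) q hq ha0 hab
    rw [nu_apply _ measurableSet_Ioo] at hpos
    have hzero : ∫⁻ z in Set.Ioo a b, ENNReal.ofReal (f z) = 0 := by
      rw [setLIntegral_congr_fun_ae measurableSet_Ioo
        (Filter.Eventually.of_forall fun z hz => ?_), lintegral_zero]
      exact ENNReal.ofReal_eq_zero.2 (le_of_lt (hsub hz))
    rw [hzero] at hpos
    exact lt_irrefl 0 hpos
  -- f is bounded by y ^ n / Cq on positive reals
  have F2 : ∀ y : ℝ, 0 < y → f y ≤ y ^ n / Cq := by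
    intro y hy
    by_contra hcon
    push_neg at hcon
    set L : ℝ := y ^ n / Cq with hL
    set ε : ℝ := (f y - L) / 2 with hεdef
    have hε0 : 0 < ε := by rw [hεdef]; linarith
    have hy1 : y ∈ {z : ℝ | L + ε < f z} := by
      simp only [Set.mem_setOf_eq]
      rw [hεdef]
      linarith
    have e1 : {z : ℝ | L + ε < f z} ∈ 𝓝 y :=
      (isOpen_lt continuous_const hf_cont).mem_nhds hy1
    have e2 : {z : ℝ | z ^ n / Cq < L + ε} ∈ 𝓝 y := by
      refine (isOpen_lt (by fun_prop) continuous_const).mem_nhds ?_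
      simp only [Set.mem_setOf_eq]
      rw [← hL]; linarith
    have e3 : Set.Ioi (0:ℝ) ∈ 𝓝 y := Ioi_mem_nhds hy
    obtain ⟨r, hr0, hball⟩ := Metric.mem_nhds_iff.1 (Filter.inter_mem (Filter.inter_mem e1 e2) e3)
    set η : ℝ := r / 2 with hη
    have hη0 : 0 < η := by rw [hη]; linarith
    have hIcc : Set.Icc (y - η) (y + η) ⊆
        ({z : ℝ | L + ε < f z} ∩ {z : ℝ | z ^ n / Cq < L + ε}) ∩ Set.Ioi 0 := by
      intro z hz
      apply hball
      rw [Metric.mem_ball, Real.dist_eq, abs_lt]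
      constructor <;> linarith [hz.1, hz.2, hη.le, hη.ge, hr0]
    have hu0 : 0 ≤ y - η := by
      have : y - η ∈ Set.Ioi (0:ℝ) := (hIcc ⟨le_rfl, by linarith⟩).2
      exact (le_of_lt this)
    have huv : y - η ≤ y + η := by linarith
    have hupper := nu_Icc_le n q hq hu0 huv
    rw [nu_apply _ measurableSet_Icc] at hupper
    have hlower : ENNReal.ofReal ((L + ε) * (2 * η)) ≤
        ∫⁻ z in Set.Icc (y - η) (y + η), ENNReal.ofReal (f z) := by
      calc ENNReal.ofReal ((L + ε) * (2 * η))
          = ENNReal.ofReal (L + ε) * volume (Set.Icc (y - η) (y + η)) := by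
            rw [Real.volume_Icc, ← ENNReal.ofReal_mul ?_]
            · congr 1; ring
            · have : (0:ℝ) < y - η + η := by
                have := hu0; linarith [hη0]
              nlinarith [F1 y hy, hε0, hcon, div_nonneg (pow_nonneg hy.le n) hCq0.le]
        _ = ∫⁻ _z in Set.Icc (y - η) (y + η), ENNReal.ofReal (L + ε) := by
            rw [setLIntegral_const, mul_comm]
        _ ≤ ∫⁻ z in Set.Icc (y - η) (y + η), ENNReal.ofReal (f z) := by
            apply setLIntegral_mono (hf_cont.measurable.ennreal_ofReal)
            intro z hz
            exact ENNReal.ofReal_le_ofReal (le_of_lt ((hIcc hz).1.1))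
    have hcomb := hlower.trans hupper
    rw [ENNReal.ofReal_le_ofReal_iff ?hnn] at hcomb
    case hnn =>
      have h1 : (0:ℝ) ≤ y + η := by linarith
      have h2 : y + η - (y - η) = 2 * η := by ring
      rw [h2]
      exact div_nonneg (mul_nonneg (by linarith) (pow_nonneg h1 n)) hCq0.le
    have hsimp : (y + η - (y - η)) = 2 * η := by ring
    rw [hsimp] at hcomb
    have hyη : (y + η) ^ n / Cq < L + ε := (hIcc ⟨by linarith, le_rfl⟩).1.2
    have h2η : (0:ℝ) < 2 * η := by linarith
    have hX : 2 * η * (y + η) ^ n / Cq = (2 * η) * ((y + η) ^ n / Cq) := by ring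
    rw [hX] at hcomb
    nlinarith [hcomb, hyη, h2η]
  -- f 0 = 0
  have F3 : f 0 = 0 := by
    have h1 : Filter.Tendsto f (𝓝[>] (0:ℝ)) (𝓝 (f 0)) :=
      (hf_cont.tendsto 0).mono_left nhdsWithin_le_nhds
    have h2 : Filter.Tendsto f (𝓝[>] (0:ℝ)) (𝓝 0) := by
      have hupp : Filter.Tendsto (fun y : ℝ => y ^ n / Cq) (𝓝[>] (0:ℝ)) (𝓝 0) := by
        have : Filter.Tendsto (fun y : ℝ => y ^ n / Cq) (𝓝 (0:ℝ)) (𝓝 ((0:ℝ) ^ n / Cq)) :=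
          ((continuous_pow n).div_const Cq).tendsto 0
        rw [zero_pow (by omega), zero_div] at this
        exact this.mono_left nhdsWithin_le_nhds
      apply tendsto_of_tendsto_of_tendsto_of_le_of_le' tendsto_const_nhds hupp
      · exact eventually_nhdsWithin_of_forall fun y hy => F1 y hy
      · exact eventually_nhdsWithin_of_forall fun y hy => F2 y hy
    exact tendsto_nhds_unique h1 h2
  -- conclude via the analytic lemmas
  have hbound : ∀ y : ℝ, 0 < y → |f y| ≤ Cq⁻¹ * y ^ n := by
    intro y hy
    rw [abs_of_nonneg (F1 y hy)]
    calc f y ≤ y ^ n / Cq := F2 y hy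
      _ = Cq⁻¹ * y ^ n := by ring
  intro k hk
  rw [iteratedDeriv_eq_iterate]
  exact iter_deriv_zero_at_zero f Cq⁻¹ n hbound F3 k (by omega)
end

section
/- Let p be a real polynomial of degree n ≥ 0, let d ∈ ℝ with d ≠ 0, and let c > 0. Then the equation e^x + d·e^{cx} = p(x) has at most n + 2 distinct real solutions. -/
open Set
open scoped ContDiff

lemma poly_contDiff (q : Polynomial ℝ) : ContDiff ℝ ∞ fun x : ℝ => q.eval x := by
  have h : (fun x : ℝ => q.eval x)
      = fun x => ∑ i ∈ Finset.range (q.natDegree + 1), q.coeff i * x ^ i :=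
    funext fun x => q.eval_eq_sum_range x
  rw [h]
  exact ContDiff.sum fun i _ => contDiff_const.mul (contDiff_id.pow i)

/-- One Rolle step: if the derivative has finitely many zeros, the function has at most
one more zero. -/
lemma rolle_step {f : ℝ → ℝ} (hf : ∀ x, DifferentiableAt ℝ f x)
    (h : {x : ℝ | deriv f x = 0}.Finite) :
    {x : ℝ | f x = 0}.Finite ∧
      {x : ℝ | f x = 0}.ncard ≤ {x : ℝ | deriv f x = 0}.ncard + 1 := by
  have key : ∀ s : Finset ℝ, (↑s ⊆ {x : ℝ | f x = 0}) → s.card ≤ h.toFinset.card + 1 := by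
    intro s hs
    have hint : ∀ x ∈ s, ∀ y ∈ s, x < y → (∀ z ∈ s, z ∉ Set.Ioo x y) →
        ∃ z ∈ h.toFinset, x < z ∧ z < y := by
      intro x hx y hy hxy _
      have hx0 : f x = 0 := hs hx
      have hy0 : f y = 0 := hs hy
      obtain ⟨z, hz, hz0⟩ := exists_deriv_eq_zero hxy
        (fun t _ => (hf t).continuousAt.continuousWithinAt) (hx0.trans hy0.symm)
      exact ⟨z, h.mem_toFinset.2 hz0, hz.1, hz.2⟩
    have := Finset.card_le_diff_of_interleaved hint
    exact this.trans (by gcongr; exact Finset.sdiff_subset)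
  have hfin : {x : ℝ | f x = 0}.Finite := by
    by_contra hinf
    obtain ⟨t, hts, hcard⟩ := Set.Infinite.exists_subset_card_eq hinf (h.toFinset.card + 2)
    have := key t hts
    omega
  refine ⟨hfin, ?_⟩
  rw [Set.ncard_eq_toFinset_card _ hfin, Set.ncard_eq_toFinset_card _ h]
  exact key hfin.toFinset (by simp)

/-- Iterated Rolle: if the `k`-th derivative has finitely many zeros, the function has at
most `k` more zeros. -/
lemma rolle_many : ∀ (k : ℕ) (f : ℝ → ℝ), ContDiff ℝ ∞ f →
    {x : ℝ | deriv^[k] f x = 0}.Finite →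
    {x : ℝ | f x = 0}.Finite ∧
      {x : ℝ | f x = 0}.ncard ≤ {x : ℝ | deriv^[k] f x = 0}.ncard + k := by
  intro k
  induction k with
  | zero => intro f _ h; exact ⟨h, by simp⟩
  | succ k ih =>
    intro f hf h
    rw [Function.iterate_succ_apply] at h
    have hdf : ContDiff ℝ ∞ (deriv f) := (contDiff_infty_iff_deriv.1 hf).2
    obtain ⟨h1, h2⟩ := ih (deriv f) hdf h
    obtain ⟨h3, h4⟩ := rolle_step (fun x => (contDiff_infty_iff_deriv.1 hf).1 x) h1
    refine ⟨h3, ?_⟩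
    calc {x : ℝ | f x = 0}.ncard ≤ {x : ℝ | deriv f x = 0}.ncard + 1 := h4
      _ ≤ {x : ℝ | deriv^[k] (deriv f) x = 0}.ncard + k + 1 := by omega
      _ = {x : ℝ | deriv^[k + 1] f x = 0}.ncard + (k + 1) := by
          rw [Function.iterate_succ_apply]; ring

/-- The basic derivative computation. -/
lemma hasDerivAt_aux (b c : ℝ) (q : Polynomial ℝ) (x : ℝ) :
    HasDerivAt (fun x => Real.exp x + b * Real.exp (c * x) - q.eval x)
      (Real.exp x + (b * c) * Real.exp (c * x) - q.derivative.eval x) x := by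
  have h1 : HasDerivAt (fun x : ℝ => Real.exp x) (Real.exp x) x := Real.hasDerivAt_exp x
  have h2 : HasDerivAt (fun x : ℝ => c * x) c x := by
    simpa using (hasDerivAt_id x).const_mul c
  have h3 : HasDerivAt (fun x : ℝ => b * Real.exp (c * x)) (b * (Real.exp (c * x) * c)) x :=
    h2.exp.const_mul b
  have h4 := q.hasDerivAt x
  have := (h1.add h3).sub h4
  exact this.congr_deriv (by ring)

lemma contDiff_aux (b c : ℝ) (q : Polynomial ℝ) :
    ContDiff ℝ ∞ (fun x => Real.exp x + b * Real.exp (c * x) - q.eval x) := by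
  refine ContDiff.sub (ContDiff.add Real.contDiff_exp ?_) (poly_contDiff q)
  exact contDiff_const.mul (Real.contDiff_exp.comp (contDiff_const.mul contDiff_id))

lemma deriv_iter_aux (c : ℝ) (p : Polynomial ℝ) : ∀ (k : ℕ) (b : ℝ),
    deriv^[k] (fun x => Real.exp x + b * Real.exp (c * x) - p.eval x)
      = fun x => Real.exp x + (b * c ^ k) * Real.exp (c * x)
          - ((Polynomial.derivative)^[k] p).eval x := by
  intro k
  induction k with
  | zero => intro b; simp
  | succ k ih =>
    intro b
    rw [Function.iterate_succ_apply', ih b]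
    funext x
    rw [show (Polynomial.derivative)^[k + 1] p
        = Polynomial.derivative ((Polynomial.derivative)^[k] p) from
      Function.iterate_succ_apply' _ _ _]
    have := hasDerivAt_aux (b * c ^ k) c ((Polynomial.derivative)^[k] p) x
    rw [this.deriv]
    ring_nf

/-- if `p` is a real polynomial of degree `n ≥ 0` (i.e. `p ≠ 0`), `d ≠ 0` and
`c > 0`, then the equation `e^x + d·e^{cx} = p(x)` has at most `n + 2` distinct real
solutions. -/
theorem exp_sum_eq_poly_solutions (p : Polynomial ℝ) (hp : p ≠ 0) (d : ℝ) (hd : d ≠ 0)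
    (c : ℝ) (hc : 0 < c) :
    {x : ℝ | Real.exp x + d * Real.exp (c * x) = p.eval x}.Finite ∧
      {x : ℝ | Real.exp x + d * Real.exp (c * x) = p.eval x}.ncard ≤ p.natDegree + 2 := by
  set n := p.natDegree with hn
  by_cases hc1 : c = 1
  · subst hc1
    by_cases hd1 : d = -1
    · -- equation reduces to `p x = 0`
      subst hd1
      have hset : {x : ℝ | Real.exp x + (-1) * Real.exp (1 * x) = p.eval x}
          = {x : ℝ | p.eval x = 0} := by
        ext x; simp [eq_comm]
      rw [hset]
      have hsub : {x : ℝ | p.eval x = 0} = ↑p.roots.toFinset := by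
        ext x; simp [Polynomial.mem_roots hp, Polynomial.IsRoot]
      rw [hsub, Set.ncard_coe_finset]
      refine ⟨Finset.finite_toSet _, ?_⟩
      calc p.roots.toFinset.card ≤ Multiset.card p.roots := p.roots.toFinset_card_le
        _ ≤ n := p.card_roots' 
        _ ≤ n + 2 := by omega
    · -- nonzero exponential part at the top
      have hset : {x : ℝ | Real.exp x + d * Real.exp (1 * x) = p.eval x}
          = {x : ℝ | (fun x => Real.exp x + d * Real.exp (1 * x) - p.eval x) x = 0} := by
        ext x; simp [sub_eq_zero]
      rw [hset]
      have htop : {x : ℝ | deriv^[n + 1]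
          (fun x => Real.exp x + d * Real.exp (1 * x) - p.eval x) x = 0} = ∅ := by
        rw [deriv_iter_aux 1 p (n + 1) d]
        ext x
        simp only [Set.mem_setOf_eq, Set.mem_empty_iff_false, iff_false]
        rw [Polynomial.iterate_derivative_eq_zero (by omega : p.natDegree < n + 1)]
        simp only [Polynomial.eval_zero, sub_zero, one_pow, mul_one, one_mul]
        intro hcontra
        have : (1 + d) * Real.exp x = 0 := by linarith [hcontra]
        rcases mul_eq_zero.1 this with h | h
        · exact hd1 (by linarith)
        · exact Real.exp_ne_zero x h
      obtain ⟨hf, hcard⟩ := rolle_many (n + 1) _ (contDiff_aux d 1 p) (by rw [htop]; simp)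
      refine ⟨hf, hcard.trans ?_⟩
      rw [htop]
      simp
  · -- c ≠ 1 : top derivative has at most one zero
    have hset : {x : ℝ | Real.exp x + d * Real.exp (c * x) = p.eval x}
        = {x : ℝ | (fun x => Real.exp x + d * Real.exp (c * x) - p.eval x) x = 0} := by
      ext x; simp [sub_eq_zero]
    rw [hset]
    have htopset : {x : ℝ | deriv^[n + 1]
        (fun x => Real.exp x + d * Real.exp (c * x) - p.eval x) x = 0}
        = {x : ℝ | Real.exp x + d * c ^ (n + 1) * Real.exp (c * x) = 0} := by
      rw [deriv_iter_aux c p (n + 1) d]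
      ext x
      rw [Polynomial.iterate_derivative_eq_zero (by omega : p.natDegree < n + 1)]
      simp [sub_eq_zero]
    have hsub : {x : ℝ | Real.exp x + d * c ^ (n + 1) * Real.exp (c * x) = 0}.Subsingleton := by
      intro x hx y hy
      simp only [Set.mem_setOf_eq] at hx hy
      have hx' : Real.exp ((1 - c) * x) = -(d * c ^ (n + 1)) := by
        have : Real.exp x = -(d * c ^ (n + 1)) * Real.exp (c * x) := by linarith
        rw [sub_mul, one_mul, Real.exp_sub, this]
        field_simp
      have hy' : Real.exp ((1 - c) * y) = -(d * c ^ (n + 1)) := by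
        have : Real.exp y = -(d * c ^ (n + 1)) * Real.exp (c * y) := by linarith
        rw [sub_mul, one_mul, Real.exp_sub, this]
        field_simp
      have := Real.exp_injective (hx'.trans hy'.symm)
      have h1c : (1 : ℝ) - c ≠ 0 := sub_ne_zero.2 (Ne.symm hc1)
      exact mul_left_cancel₀ h1c this
    have htopfin : {x : ℝ | deriv^[n + 1]
        (fun x => Real.exp x + d * Real.exp (c * x) - p.eval x) x = 0}.Finite := by
      rw [htopset]; exact hsub.finite
    obtain ⟨hf, hcard⟩ := rolle_many (n + 1) _ (contDiff_aux d c p) htopfin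
    refine ⟨hf, hcard.trans ?_⟩
    have : {x : ℝ | deriv^[n + 1]
        (fun x => Real.exp x + d * Real.exp (c * x) - p.eval x) x = 0}.ncard ≤ 1 := by
      rw [htopset]
      rcases hsub.eq_empty_or_singleton with h | ⟨a, h⟩
      · rw [h]; simp
      · rw [h]; simp
    omega
end
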